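/- The expectation ⟨ψ| R_z(θ)† Z' R_z(θ) |ψ⟩, where Z' is any Hermitian 2×2 matrix and ψ a fixed unit vector, is of the form a + b·cos θ + c·sin θ for some real constants a, b, c depending on ψ and Z'. -/
import Mathlib


open Complex Matrix Real

noncomputable def Rz (δ : ℝ) : Matrix (Fin 2) (Fin 2) ℂ :=
  Matrix.diagonal ![Complex.exp (-Complex.I * (δ / 2)), Complex.exp (Complex.I * (δ / 2))]

lemma key_expectation (p q z00 z01 z11 : ℂ) (θ : ℝ) (h00 : z00.im = 0) (h11 : z11.im = 0) :
    star p * (Complex.exp (Complex.I * (θ/2)) * (z00 * (Complex.exp (-Complex.I * (θ/2)) * p)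
        + z01 * (Complex.exp (Complex.I * (θ/2)) * q)))
      + star q * (Complex.exp (-Complex.I * (θ/2)) *
          ((starRingEnd ℂ) z01 * (Complex.exp (-Complex.I * (θ/2)) * p)
            + z11 * (Complex.exp (Complex.I * (θ/2)) * q))) =
    ((Complex.normSq p * z00.re + Complex.normSq q * z11.re
        + 2 * ((starRingEnd ℂ) p * z01 * q).re * Real.cos θ
        + -2 * ((starRingEnd ℂ) p * z01 * q).im * Real.sin θ : ℝ) : ℂ) := by
  set u := Complex.exp (Complex.I * (θ/2)) with hu
  set v := Complex.exp (-Complex.I * (θ/2)) with hv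
  set w := (starRingEnd ℂ) p * z01 * q with hwdef
  have huv : u * v = 1 := by
    rw [hu, hv, ← Complex.exp_add]; ring_nf; exact Complex.exp_zero
  have huu : u * u = Complex.cos θ + Complex.sin θ * Complex.I := by
    rw [hu, ← Complex.exp_add]
    have h : Complex.I * (θ/2) + Complex.I * (θ/2) = (θ:ℂ) * Complex.I := by ring
    rw [h, Complex.exp_mul_I]
  have hvv : v * v = Complex.cos θ - Complex.sin θ * Complex.I := by
    rw [hv, ← Complex.exp_add]
    have h : -Complex.I * (θ/2) + -Complex.I * (θ/2) = (-(θ:ℂ)) * Complex.I := by ring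
    rw [h, Complex.exp_mul_I, Complex.cos_neg, Complex.sin_neg]
    ring
  have hp : (starRingEnd ℂ) p * p = (Complex.normSq p : ℂ) := by
    rw [mul_comm, Complex.mul_conj]
  have hq : (starRingEnd ℂ) q * q = (Complex.normSq q : ℂ) := by
    rw [mul_comm, Complex.mul_conj]
  have h00c : z00 = (z00.re : ℂ) := by apply Complex.ext <;> simp [h00]
  have h11c : z11 = (z11.re : ℂ) := by apply Complex.ext <;> simp [h11]
  have hwc : w = (w.re : ℂ) + (w.im : ℂ) * Complex.I := (Complex.re_add_im w).symm
  have hwc' : p * (starRingEnd ℂ) z01 * (starRingEnd ℂ) q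
      = (w.re : ℂ) - (w.im : ℂ) * Complex.I := by
    have h1 : p * (starRingEnd ℂ) z01 * (starRingEnd ℂ) q = (starRingEnd ℂ) w := by
      rw [hwdef]; simp only [_root_.map_mul, Complex.conj_conj]; try ring
    rw [h1]; apply Complex.ext <;> simp
  have hI : Complex.I * Complex.I = -1 := Complex.I_mul_I
  push_cast
  simp only [star_def]
  linear_combination ((starRingEnd ℂ) p * p * z00 + (starRingEnd ℂ) q * q * z11) * huv
    + w * huu + (p * (starRingEnd ℂ) z01 * (starRingEnd ℂ) q) * hvv
    + (z00.re : ℂ) * hp + (z11.re : ℂ) * hq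
    + ((starRingEnd ℂ) p * p) * h00c + ((starRingEnd ℂ) q * q) * h11c
    + (Complex.cos θ + Complex.sin θ * Complex.I) * hwc
    + (Complex.cos θ - Complex.sin θ * Complex.I) * hwc'
    + (2 * (w.im : ℂ) * Complex.sin θ) * hI

/-- The expectation ⟨ψ| R_z(θ)† Z' R_z(θ) |ψ⟩ for a Hermitian Z' and unit ψ is a
degree-1 trigonometric polynomial a + b·cos θ + c·sin θ in θ. -/
theorem expectation_is_trig_poly (Z' : Matrix (Fin 2) (Fin 2) ℂ) (hZ : Z'.IsHermitian)
    (ψ : EuclideanSpace ℂ (Fin 2)) (hψ : ‖ψ‖ = 1) :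
    ∃ a b c : ℝ, ∀ θ : ℝ,
      star (ψ : Fin 2 → ℂ) ⬝ᵥ ((Rz θ)ᴴ *ᵥ (Z' *ᵥ (Rz θ *ᵥ ψ))) =
        ((a + b * Real.cos θ + c * Real.sin θ : ℝ) : ℂ) := by
  refine ⟨Complex.normSq (ψ 0) * (Z' 0 0).re + Complex.normSq (ψ 1) * (Z' 1 1).re,
    2 * ((starRingEnd ℂ) (ψ 0) * Z' 0 1 * ψ 1).re,
    -2 * ((starRingEnd ℂ) (ψ 0) * Z' 0 1 * ψ 1).im, fun θ => ?_⟩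
  have h00 : (Z' 0 0).im = 0 := Complex.conj_eq_iff_im.mp (hZ.apply 0 0)
  have h11 : (Z' 1 1).im = 0 := Complex.conj_eq_iff_im.mp (hZ.apply 1 1)
  have h10 : Z' 1 0 = (starRingEnd ℂ) (Z' 0 1) := (hZ.apply 1 0).symm
  have hstar1 : star (Complex.exp (-Complex.I * ((θ:ℂ) / 2)))
      = Complex.exp (Complex.I * ((θ:ℂ) / 2)) := by
    rw [Complex.star_def, ← Complex.exp_conj]
    congr 1
    simp [map_div₀, Complex.conj_I, Complex.conj_ofReal, map_ofNat]
  have hstar2 : star (Complex.exp (Complex.I * ((θ:ℂ) / 2)))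
      = Complex.exp (-Complex.I * ((θ:ℂ) / 2)) := by
    rw [Complex.star_def, ← Complex.exp_conj]
    congr 1
    simp [map_div₀, Complex.conj_I, Complex.conj_ofReal, map_ofNat]
  simp only [Rz, Matrix.mulVec, dotProduct, Fin.sum_univ_two, Matrix.diagonal,
    Matrix.conjTranspose_apply, Matrix.of_apply, Pi.star_apply, Matrix.cons_val',
    Matrix.cons_val_zero, Matrix.cons_val_one, Matrix.head_cons, h10,
    if_true, Fin.zero_eq_one_iff, Fin.one_eq_zero_iff, Nat.succ_ne_self,
    show ((0:Fin 2) = 1) = False by simp, show ((1:Fin 2) = 0) = False by simp,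
    if_false, star_zero, zero_mul, mul_zero, add_zero, zero_add, hstar1, hstar2]
  exact key_expectation (ψ 0) (ψ 1) (Z' 0 0) (Z' 0 1) (Z' 1 1) θ h00 h11
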